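/- Suppose the sequence g^t = (β^t, z^t, u^t), with z^t ∈ Z_r for all t, satisfies the PPA variational inequality with a symmetric positive definite matrix H, and assume a saddle point exists. Then the sequence {g^t} converges to a point g^∞ = (β^∞, z^∞, u^∞) which is itself a saddle point. -/

import Mathlib

open Matrix Filter

noncomputable section

/-- Vectors in ℝ^p. -/
abbrev Vec (p : ℕ) := Fin p → ℝ

/-- Triples `g = (β, z, u) ∈ ℝ^p × ℝ^p × ℝ^p`. -/
abbrev Trip (p : ℕ) := Vec p × Vec p × Vec p

/-- Index type for ℝ^{3p}. -/
abbrev Idx3 (p : ℕ) := Fin p ⊕ Fin p ⊕ Fin p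

/-- Identify a triple `(β, z, u)` with a vector in ℝ^{3p}. -/
def toSum {p : ℕ} (g : Trip p) : Idx3 p → ℝ := Sum.elim g.1 (Sum.elim g.2.1 g.2.2)

/-- The operator `F(β, z, u) = (−Aᵀu, u, Aβ − z − c)`. -/
def Fop {p : ℕ} (A : Matrix (Fin p) (Fin p) ℝ) (c : Vec p) (g : Trip p) : Trip p :=
  (-(Aᵀ *ᵥ g.2.2), g.2.2, A *ᵥ g.1 - g.2.1 - c)

/-- Membership in the box `Z_r = {z : ‖z‖_∞ ≤ r}`. -/
def inZ {p : ℕ} (r : ℝ) (z : Vec p) : Prop := ∀ j, |z j| ≤ r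

/-- The ℓ₁ norm on ℝ^p. -/
def l1 {p : ℕ} (β : Vec p) : ℝ := ∑ j, |β j|

/-- The Euclidean inner product on ℝ^{3p}. -/
def ip {p : ℕ} (v w : Trip p) : ℝ := toSum v ⬝ᵥ toSum w

/-- The bilinear form `⟨v, H w⟩` on ℝ^{3p}; in particular `ipH H v v = ‖v‖_H²`. -/
def ipH {p : ℕ} (H : Matrix (Idx3 p) (Idx3 p) ℝ) (v w : Trip p) : ℝ :=
  toSum v ⬝ᵥ (H *ᵥ toSum w)

/-- `g* = (β*, z*, u*)` is a saddle point: `z* ∈ Z_r` and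
`‖β‖₁ − ‖β*‖₁ + ⟨g − g*, F(g*)⟩ ≥ 0` for all `g = (β, z, u)` with `z ∈ Z_r`. -/
def IsSaddle {p : ℕ} (A : Matrix (Fin p) (Fin p) ℝ) (c : Vec p) (r : ℝ)
    (gs : Trip p) : Prop :=
  inZ r gs.2.1 ∧ ∀ g : Trip p, inZ r g.2.1 →
    0 ≤ l1 g.1 - l1 gs.1 + ip (g - gs) (Fop A c gs)

/-- The sequence `g^t` satisfies the PPA variational inequality with matrix `H`:
for every `t` and every `g = (β, z, u)` with `z ∈ Z_r`,
`‖β‖₁ − ‖β^{t+1}‖₁ + ⟨g − g^{t+1}, F(g^{t+1})⟩ ≥ ⟨g − g^{t+1}, H(g^t − g^{t+1})⟩`. -/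
def SatisfiesPVI {p : ℕ} (A : Matrix (Fin p) (Fin p) ℝ) (c : Vec p) (r : ℝ)
    (H : Matrix (Idx3 p) (Idx3 p) ℝ) (g : ℕ → Trip p) : Prop :=
  ∀ t : ℕ, ∀ gg : Trip p, inZ r gg.2.1 →
    ipH H (gg - g (t + 1)) (g t - g (t + 1)) ≤
      l1 gg.1 - l1 (g (t + 1)).1 + ip (gg - g (t + 1)) (Fop A c (g (t + 1)))

/-! ### Auxiliary lemmas -/

/-- The inverse of `toSum`. -/
def tripOf {p : ℕ} (y : Idx3 p → ℝ) : Trip p :=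
  (fun i => y (Sum.inl i), fun i => y (Sum.inr (Sum.inl i)), fun i => y (Sum.inr (Sum.inr i)))

lemma toSum_sub {p : ℕ} (a b : Trip p) : toSum (a - b) = toSum a - toSum b := by
  funext i; cases i with
  | inl i => rfl
  | inr i => cases i with
    | inl i => rfl
    | inr i => rfl

lemma toSum_tripOf {p : ℕ} (y : Idx3 p → ℝ) : toSum (tripOf y) = y := by
  funext i; cases i with
  | inl i => rfl
  | inr i => cases i <;> rfl

lemma ip_decomp {p : ℕ} (a b : Trip p) :
    ip a b = a.1 ⬝ᵥ b.1 + a.2.1 ⬝ᵥ b.2.1 + a.2.2 ⬝ᵥ b.2.2 := by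
  simp [ip, toSum, dotProduct, Fintype.sum_sum_type, add_assoc]

lemma ip_swap {p : ℕ} (a b w : Trip p) : ip (a - b) w = -ip (b - a) w := by
  rw [ip, ip, toSum_sub, toSum_sub, ← neg_sub (toSum b) (toSum a), neg_dotProduct]

lemma skew {p : ℕ} (A : Matrix (Fin p) (Fin p) ℝ) (c : Vec p) (v w : Trip p) :
    ip (v - w) (Fop A c v) + ip (w - v) (Fop A c w) = 0 := by
  have hA : ∀ x y : Vec p, y ⬝ᵥ (A *ᵥ x) = x ⬝ᵥ (Aᵀ *ᵥ y) := fun x y => by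
    rw [dotProduct_mulVec x Aᵀ y, vecMul_transpose, dotProduct_comm]
  obtain ⟨v1, v2, v3⟩ := v
  obtain ⟨w1, w2, w3⟩ := w
  simp only [ip_decomp, Fop, Prod.fst_sub, Prod.snd_sub, Prod.mk_sub_mk,
    sub_dotProduct, dotProduct_sub, dotProduct_neg, dotProduct_add, hA,
    mulVec_sub, mulVec_add, mulVec_neg]
  rw [dotProduct_comm v3 v2, dotProduct_comm v3 w2, dotProduct_comm w3 v2,
    dotProduct_comm w3 w2, dotProduct_comm v3 c, dotProduct_comm w3 c]
  ring

lemma dp_self_nonneg {n : Type*} [Fintype n] (v : n → ℝ) : 0 ≤ v ⬝ᵥ v :=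
  Finset.sum_nonneg fun _ _ => mul_self_nonneg _

lemma coercive {n : Type*} [Fintype n] [DecidableEq n] {H : Matrix n n ℝ} (hH : H.PosDef) :
    ∃ m > 0, ∀ v : n → ℝ, m * (v ⬝ᵥ v) ≤ v ⬝ᵥ (H *ᵥ v) := by
  rcases isEmpty_or_nonempty n with hn | hn
  · exact ⟨1, one_pos, fun v => by simp [dotProduct]⟩
  have hcont : Continuous fun v : n → ℝ => v ⬝ᵥ (H *ᵥ v) := by
    apply continuous_finset_sum; intro i _
    exact (continuous_apply i).mul
      (continuous_finset_sum _ fun j _ => continuous_const.mul (continuous_apply j))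
  have hcont2 : Continuous fun v : n → ℝ => v ⬝ᵥ v := by
    apply continuous_finset_sum; intro i _
    exact (continuous_apply i).mul (continuous_apply i)
  set S : Set (n → ℝ) := {v | v ⬝ᵥ v = 1} with hS
  have hSne : S.Nonempty := by
    obtain ⟨i0⟩ := hn
    refine ⟨Pi.single i0 1, ?_⟩
    simp [hS, dotProduct, Pi.single_apply]
  have hSclosed : IsClosed S := isClosed_eq hcont2 continuous_const
  have hScompact : IsCompact S := by
    refine (isCompact_closedBall (0 : n → ℝ) 1).of_isClosed_subset hSclosed ?_
    intro v hv
    rw [Metric.mem_closedBall, dist_zero_right]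
    rw [pi_norm_le_iff_of_nonneg zero_le_one]
    intro i
    rw [Real.norm_eq_abs, abs_le_one_iff_mul_self_le_one]
    calc v i * v i ≤ v ⬝ᵥ v := Finset.single_le_sum
          (fun j _ => mul_self_nonneg (v j)) (Finset.mem_univ i)
      _ = 1 := hv
  obtain ⟨u, huS, hmin⟩ := hScompact.exists_isMinOn hSne hcont.continuousOn
  have hu0 : u ≠ 0 := by
    intro h; rw [h] at huS; simp [hS, dotProduct] at huS
  refine ⟨u ⬝ᵥ (H *ᵥ u), (by simpa using hH.dotProduct_mulVec_pos hu0), fun v => ?_⟩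
  rcases eq_or_ne v 0 with rfl | hv0
  · simp
  have hvv : 0 < v ⬝ᵥ v := by
    rcases (dp_self_nonneg v).lt_or_eq with h | h
    · exact h
    · exact absurd ((dotProduct_self_eq_zero).mp h.symm) hv0
  set t : ℝ := Real.sqrt (v ⬝ᵥ v) with ht
  have ht0 : 0 < t := Real.sqrt_pos.mpr hvv
  have ht2 : t * t = v ⬝ᵥ v := Real.mul_self_sqrt hvv.le
  have hmem : (t⁻¹ • v) ∈ S := by
    simp only [hS, Set.mem_setOf_eq, smul_dotProduct, dotProduct_smul, smul_eq_mul]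
    field_simp
    linarith [ht2]
  have hle : u ⬝ᵥ (H *ᵥ u) ≤ (t⁻¹ • v) ⬝ᵥ (H *ᵥ (t⁻¹ • v)) := hmin hmem
  have hexp : (t⁻¹ • v) ⬝ᵥ (H *ᵥ (t⁻¹ • v)) = t⁻¹ * t⁻¹ * (v ⬝ᵥ (H *ᵥ v)) := by
    rw [mulVec_smul, smul_dotProduct, dotProduct_smul]
    simp [smul_eq_mul]; ring
  rw [hexp] at hle
  have h3 : (u ⬝ᵥ (H *ᵥ u)) * (t * t) ≤ t⁻¹ * t⁻¹ * (v ⬝ᵥ (H *ᵥ v)) * (t * t) :=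
    mul_le_mul_of_nonneg_right hle (by positivity)
  calc (u ⬝ᵥ (H *ᵥ u)) * (v ⬝ᵥ v) = (u ⬝ᵥ (H *ᵥ u)) * (t * t) := by rw [ht2]
    _ ≤ t⁻¹ * t⁻¹ * (v ⬝ᵥ (H *ᵥ v)) * (t * t) := h3
    _ = v ⬝ᵥ (H *ᵥ v) := by field_simp

lemma tendsto_zero_of_dotSelf {n : Type*} [Fintype n] (v : ℕ → n → ℝ)
    (h : Tendsto (fun t => v t ⬝ᵥ v t) atTop (nhds 0)) :
    Tendsto v atTop (nhds 0) := by
  rw [tendsto_pi_nhds]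
  intro i
  have hb : ∀ t, ‖v t i‖ ≤ Real.sqrt (v t ⬝ᵥ v t) := by
    intro t
    rw [Real.norm_eq_abs, ← Real.sqrt_sq_eq_abs]
    apply Real.sqrt_le_sqrt
    rw [sq]
    exact Finset.single_le_sum (fun j _ => mul_self_nonneg (v t j)) (Finset.mem_univ i)
  have hs : Tendsto (fun t => Real.sqrt (v t ⬝ᵥ v t)) atTop (nhds 0) := by
    have := (Real.continuous_sqrt.tendsto 0).comp h
    simpa [Function.comp_def] using this
  simpa using squeeze_zero_norm hb hs

/-- Global convergence: if `g^t` (with `z^t ∈ Z_r`) satisfies the PPA variational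
inequality with symmetric positive definite `H` and a saddle point exists, then `g^t`
converges to some `g^∞` which is itself a saddle point. -/
theorem stmt12 {p : ℕ} (A : Matrix (Fin p) (Fin p) ℝ) (c : Vec p) (r : ℝ) (hr : 0 ≤ r)
    (H : Matrix (Idx3 p) (Idx3 p) ℝ) (hH : H.PosDef)
    (g : ℕ → Trip p) (hz : ∀ t, inZ r (g t).2.1)
    (hPVI : SatisfiesPVI A c r H g)
    (hex : ∃ gs : Trip p, IsSaddle A c r gs) :
    ∃ ginf : Trip p, IsSaddle A c r ginf ∧ Tendsto g atTop (nhds ginf) := by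
  classical
  obtain ⟨gs, hgs⟩ := hex
  obtain ⟨m, hm, hcoer⟩ := coercive hH
  set x : ℕ → Idx3 p → ℝ := fun t => toSum (g t) with hxdef
  have hHsymm : ∀ v w : Idx3 p → ℝ, v ⬝ᵥ (H *ᵥ w) = w ⬝ᵥ (H *ᵥ v) := by
    intro v w
    have hT : Hᵀ = H := by
      simpa [Matrix.IsHermitian, conjTranspose_eq_transpose_of_trivial] using hH.1
    rw [dotProduct_mulVec w H v, ← hT, vecMul_transpose, hT, dotProduct_comm]
  have hq_nonneg : ∀ v : Idx3 p → ℝ, 0 ≤ v ⬝ᵥ (H *ᵥ v) := fun v =>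
    le_trans (mul_nonneg hm.le (dp_self_nonneg v)) (hcoer v)
  -- key cross-term nonnegativity
  have key : ∀ gstar : Trip p, IsSaddle A c r gstar → ∀ t : ℕ,
      0 ≤ (x (t + 1) - toSum gstar) ⬝ᵥ (H *ᵥ (x t - x (t + 1))) := by
    intro gstar hstar t
    have h1 := hPVI t gstar hstar.1
    have h2 := hstar.2 (g (t + 1)) (hz (t + 1))
    have h3 := skew A c (g (t + 1)) gstar
    have e1 : ip (gstar - g (t + 1)) (Fop A c (g (t + 1)))
        = -ip (g (t + 1) - gstar) (Fop A c (g (t + 1))) := ip_swap _ _ _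
    have e2 : ip (g (t + 1) - gstar) (Fop A c gstar)
        = -ip (gstar - g (t + 1)) (Fop A c gstar) := ip_swap _ _ _
    have h5 : ipH H (gstar - g (t + 1)) (g t - g (t + 1))
        = -((x (t + 1) - toSum gstar) ⬝ᵥ (H *ᵥ (x t - x (t + 1)))) := by
      rw [ipH, toSum_sub, toSum_sub, ← neg_sub (x (t + 1)) (toSum gstar), neg_dotProduct]
    rw [e1, h5] at h1
    rw [e2] at h2
    linarith
  -- Fejér monotonicity
  have fejer : ∀ gstar : Trip p, IsSaddle A c r gstar → ∀ t : ℕ,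
      (x (t + 1) - toSum gstar) ⬝ᵥ (H *ᵥ (x (t + 1) - toSum gstar))
        + (x t - x (t + 1)) ⬝ᵥ (H *ᵥ (x t - x (t + 1)))
      ≤ (x t - toSum gstar) ⬝ᵥ (H *ᵥ (x t - toSum gstar)) := by
    intro gstar hstar t
    have hk := key gstar hstar t
    have hexpand : x t - toSum gstar = (x (t + 1) - toSum gstar) + (x t - x (t + 1)) := by
      abel
    rw [hexpand]
    set a := x (t + 1) - toSum gstar with ha
    set d := x t - x (t + 1) with hd
    have hq : (a + d) ⬝ᵥ (H *ᵥ (a + d))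
        = a ⬝ᵥ (H *ᵥ a) + a ⬝ᵥ (H *ᵥ d) + d ⬝ᵥ (H *ᵥ a) + d ⬝ᵥ (H *ᵥ d) := by
      simp only [mulVec_add, dotProduct_add, add_dotProduct]
      ring
    have hsym := hHsymm d a
    rw [hq]
    linarith
  set qd : ℕ → ℝ := fun t => (x t - x (t + 1)) ⬝ᵥ (H *ᵥ (x t - x (t + 1))) with hqddef
  set qs : ℕ → ℝ := fun t => (x t - toSum gs) ⬝ᵥ (H *ᵥ (x t - toSum gs)) with hqsdef
  have hsumle : ∀ nn : ℕ, ∑ t ∈ Finset.range nn, qd t + qs nn ≤ qs 0 := by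
    intro nn
    induction nn with
    | zero => simp
    | succ k ih =>
      rw [Finset.sum_range_succ]
      have := fejer gs hgs k
      simp only [hqddef, hqsdef] at *
      linarith
  have hsummable : Summable qd := by
    apply summable_of_sum_range_le (fun t => hq_nonneg _)
    intro nn
    have := hsumle nn
    have h0 : 0 ≤ qs nn := hq_nonneg _
    linarith
  have hqd0 : Tendsto qd atTop (nhds 0) := hsummable.tendsto_atTop_zero
  -- from q tendsto zero to vector tendsto zero
  have hq_to_vec : ∀ w : ℕ → Idx3 p → ℝ,
      Tendsto (fun t => w t ⬝ᵥ (H *ᵥ w t)) atTop (nhds 0) →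
      Tendsto w atTop (nhds 0) := by
    intro w hw
    apply tendsto_zero_of_dotSelf
    have h1 : ∀ t, 0 ≤ w t ⬝ᵥ w t := fun t => dp_self_nonneg _
    have h2 : ∀ t, w t ⬝ᵥ w t ≤ (1 / m) * (w t ⬝ᵥ (H *ᵥ w t)) := by
      intro t
      calc w t ⬝ᵥ w t = (1 / m) * (m * (w t ⬝ᵥ w t)) := by field_simp
        _ ≤ (1 / m) * (w t ⬝ᵥ (H *ᵥ w t)) :=
            mul_le_mul_of_nonneg_left (hcoer _) (by positivity)
    have h3 : Tendsto (fun t => (1 / m) * (w t ⬝ᵥ (H *ᵥ w t))) atTop (nhds 0) := by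
      have := hw.const_mul (1 / m)
      simpa using this
    exact squeeze_zero h1 h2 h3
  have hδ : Tendsto (fun t => x t - x (t + 1)) atTop (nhds 0) := hq_to_vec _ hqd0
  -- boundedness
  have hqs_le : ∀ t, qs t ≤ qs 0 := by
    intro t
    have := hsumle t
    have h0 : ∀ s ∈ Finset.range t, 0 ≤ qd s := fun s _ => hq_nonneg _
    have := Finset.sum_nonneg h0
    linarith [hsumle t]
  set R : ℝ := Real.sqrt (qs 0 / m) with hR
  have hbound : ∀ t i, |x t i - toSum gs i| ≤ R := by
    intro t i
    rw [← Real.sqrt_sq_eq_abs]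
    apply Real.sqrt_le_sqrt
    have h1 : (x t i - toSum gs i) ^ 2 ≤ (x t - toSum gs) ⬝ᵥ (x t - toSum gs) := by
      rw [sq]
      exact Finset.single_le_sum
        (fun j _ => mul_self_nonneg ((x t - toSum gs) j)) (Finset.mem_univ i)
    have h2 : m * ((x t - toSum gs) ⬝ᵥ (x t - toSum gs)) ≤ qs t := hcoer _
    have h3 := hqs_le t
    rw [le_div_iff₀ hm]
    nlinarith
  set K : Set (Idx3 p → ℝ) :=
    Set.univ.pi fun i => Set.Icc (toSum gs i - R) (toSum gs i + R) with hK
  have hKc : IsCompact K := isCompact_univ_pi fun i => isCompact_Icc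
  have hmem : ∀ t, x t ∈ K := by
    intro t
    rw [hK, Set.mem_univ_pi]
    intro i
    rw [Set.mem_Icc]
    have := abs_le.mp (hbound t i)
    constructor <;> linarith [this.1, this.2]
  obtain ⟨xinf, _, n, hnmono, hconv⟩ := hKc.tendsto_subseq hmem
  set ginf : Trip p := tripOf xinf with hginf
  have htos : toSum ginf = xinf := toSum_tripOf xinf
  have hn_atTop : Tendsto n atTop atTop := hnmono.tendsto_atTop
  have hδn : Tendsto (fun k => x (n k) - x (n k + 1)) atTop (nhds 0) := by
    have := hδ.comp hn_atTop
    simpa [Function.comp_def] using this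
  have hconv' : Tendsto (fun k => x (n k)) atTop (nhds xinf) := by
    simpa [Function.comp_def] using hconv
  have hconv1 : Tendsto (fun k => x (n k + 1)) atTop (nhds xinf) := by
    have h1 := hconv'.sub hδn
    simpa using h1
  -- ginf is a saddle point
  have hsaddle : IsSaddle A c r ginf := by
    constructor
    · intro j
      have hcl : Tendsto (fun k => x (n k) (Sum.inr (Sum.inl j))) atTop
          (nhds (xinf (Sum.inr (Sum.inl j)))) := (tendsto_pi_nhds.mp hconv') _
      have habs := (continuous_abs.tendsto _).comp hcl
      have hb : ∀ k, |x (n k) (Sum.inr (Sum.inl j))| ≤ r := fun k => hz (n k) j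
      exact le_of_tendsto habs (Filter.Eventually.of_forall hb)
    · intro gg hgg
      have hcont2 : Continuous (fun y : Idx3 p → ℝ =>
          l1 gg.1 - l1 (tripOf y).1 + ip (gg - tripOf y) (Fop A c (tripOf y))) := by
        simp only [ip, toSum, l1, Fop, tripOf, dotProduct, mulVec, Fintype.sum_sum_type,
          Sum.elim_inl, Sum.elim_inr, Prod.fst_sub, Prod.snd_sub, Pi.sub_apply, Pi.neg_apply]
        fun_prop
      have hT2 : Tendsto (fun k => l1 gg.1 - l1 (g (n k + 1)).1
            + ip (gg - g (n k + 1)) (Fop A c (g (n k + 1)))) atTop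
          (nhds (l1 gg.1 - l1 ginf.1 + ip (gg - ginf) (Fop A c ginf))) := by
        have := (hcont2.tendsto xinf).comp hconv1
        exact this
      have hcont1 : Continuous (fun yw : (Idx3 p → ℝ) × (Idx3 p → ℝ) =>
          (toSum gg - yw.1) ⬝ᵥ (H *ᵥ yw.2)) := by
        simp only [dotProduct, mulVec, Pi.sub_apply]
        fun_prop
      have hpair : Tendsto (fun k => (x (n k + 1), x (n k) - x (n k + 1))) atTop
          (nhds (xinf, 0)) := hconv1.prodMk_nhds hδn
      have hT1 : Tendsto (fun k => ipH H (gg - g (n k + 1)) (g (n k) - g (n k + 1)))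
          atTop (nhds 0) := by
        have h1 := (hcont1.tendsto (xinf, 0)).comp hpair
        simp only [Function.comp, mulVec_zero, dotProduct_zero] at h1
        have heq : (fun k => ipH H (gg - g (n k + 1)) (g (n k) - g (n k + 1)))
            = fun k => (toSum gg - x (n k + 1)) ⬝ᵥ (H *ᵥ (x (n k) - x (n k + 1))) := by
          funext k
          rw [ipH, toSum_sub, toSum_sub]
        rw [heq]
        exact h1
      exact le_of_tendsto_of_tendsto' hT1 hT2 fun k => hPVI (n k) gg hgg
  -- full convergence
  set ψ : ℕ → ℝ := fun t => (x t - xinf) ⬝ᵥ (H *ᵥ (x t - xinf)) with hψ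
  have hψ_anti : Antitone ψ := by
    apply antitone_nat_of_succ_le
    intro t
    have := fejer ginf hsaddle t
    rw [htos] at this
    have h0 : 0 ≤ qd t := hq_nonneg _
    simp only [hψ, hqddef] at *
    linarith
  have hψ_nonneg : ∀ t, 0 ≤ ψ t := fun t => hq_nonneg _
  have hψ_sub : Tendsto (fun k => ψ (n k)) atTop (nhds 0) := by
    have hc3 : Continuous (fun y : Idx3 p → ℝ => (y - xinf) ⬝ᵥ (H *ᵥ (y - xinf))) := by
      simp only [dotProduct, mulVec, Pi.sub_apply]
      fun_prop
    have h := (hc3.tendsto xinf).comp hconv'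
    have h0 : (xinf - xinf) ⬝ᵥ (H *ᵥ (xinf - xinf)) = 0 := by simp [sub_self]
    rw [h0] at h
    exact h
  have hψ0 : Tendsto ψ atTop (nhds 0) := by
    have hbdd : BddBelow (Set.range ψ) := by
      refine ⟨0, ?_⟩
      rintro y ⟨t, rfl⟩
      exact hψ_nonneg t
    have h1 : Tendsto ψ atTop (nhds (⨅ t, ψ t)) := tendsto_atTop_ciInf hψ_anti hbdd
    have h2 : Tendsto (fun k => ψ (n k)) atTop (nhds (⨅ t, ψ t)) := by
      have := h1.comp hn_atTop
      simpa [Function.comp_def] using this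
    have h3 : (⨅ t, ψ t) = 0 := tendsto_nhds_unique h2 hψ_sub
    rwa [h3] at h1
  have hxinf0 : Tendsto (fun t => x t - xinf) atTop (nhds 0) := hq_to_vec _ hψ0
  have hxconv : Tendsto x atTop (nhds xinf) := by
    have := hxinf0.add (tendsto_const_nhds (x := xinf))
    simpa using this
  refine ⟨ginf, hsaddle, ?_⟩
  have h1 : Tendsto (fun t => (g t).1) atTop (nhds ginf.1) := by
    rw [tendsto_pi_nhds]
    intro i
    exact (tendsto_pi_nhds.mp hxconv) (Sum.inl i)
  have h2 : Tendsto (fun t => (g t).2.1) atTop (nhds ginf.2.1) := by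
    rw [tendsto_pi_nhds]
    intro i
    exact (tendsto_pi_nhds.mp hxconv) (Sum.inr (Sum.inl i))
  have h3 : Tendsto (fun t => (g t).2.2) atTop (nhds ginf.2.2) := by
    rw [tendsto_pi_nhds]
    intro i
    exact (tendsto_pi_nhds.mp hxconv) (Sum.inr (Sum.inr i))
  exact h1.prodMk_nhds (h2.prodMk_nhds h3)
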